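/- Let G be a connected cubic graph with vertex partition {A, J} where A induces a tree T and J is independent. Extending T by one edge from each vertex of J to T yields a spanning tree S⁺ of G in which every vertex of J is a leaf, and every component of the cotree G − E(S⁺) has an even number of edges. -/

import Mathlib

open SimpleGraph Finset

/-- The set of edges of `H` lying in the connected component `c` of `H`. -/
def cotreeCompEdges {V : Type*} (H : SimpleGraph V) (c : H.ConnectedComponent) :
    Set (Sym2 V) :=
  {e | e ∈ H.edgeSet ∧ ∀ v ∈ e, H.connectedComponentMk v = c}


private lemma exists_lt_connected {V : Type*} {G : SimpleGraph V}
    (hconn : G.Connected) (h : ¬ G.IsAcyclic) :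
    ∃ G' : SimpleGraph V, G' < G ∧ G'.Connected := by
  rw [isAcyclic_iff_forall_adj_isBridge] at h
  push_neg at h
  obtain ⟨v, w, hvw, hbr⟩ := h
  rw [isBridge_iff] at hbr
  push_neg at hbr
  have hr : (G \ fromEdgeSet {s(v, w)}).Reachable v w := hbr
  set G' := G \ fromEdgeSet {s(v, w)} with hG'
  have hle : G' ≤ G := sdiff_le
  have hlt : G' < G := by
    refine lt_of_le_of_ne hle ?_
    intro he
    have : G'.Adj v w := he ▸ hvw
    rw [hG', sdiff_adj, fromEdgeSet_adj] at this
    exact this.2 ⟨rfl, hvw.ne⟩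
  have key : ∀ {x y : V}, G.Walk x y → G'.Reachable x y := by
    intro x y p
    induction p with
    | nil => exact Reachable.refl _
    | @cons a b c hab p ih =>
      refine Reachable.trans ?_ ih
      by_cases hG : G'.Adj a b
      · exact hG.reachable
      · rw [hG', sdiff_adj, fromEdgeSet_adj] at hG
        push_neg at hG
        have heq := (hG hab).1
        rw [Set.mem_singleton_iff, Sym2.eq_iff] at heq
        rcases heq with ⟨rfl, rfl⟩ | ⟨rfl, rfl⟩
        · exact hr
        · exact hr.symm
  have : Nonempty V := hconn.nonempty
  exact ⟨G', hlt, ⟨fun x y => key (hconn.preconnected x y).some⟩⟩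

private lemma card_le_of_connected' {V : Type*} [Fintype V] [DecidableEq V] (n : ℕ) :
    ∀ (G : SimpleGraph V) [Fintype G.edgeSet], G.edgeFinset.card ≤ n → G.Connected →
      Fintype.card V ≤ G.edgeFinset.card + 1 := by
  classical
  induction n with
  | zero =>
    intro G _ hle hconn
    by_cases h : G.IsAcyclic
    · exact le_of_eq (IsTree.card_edgeFinset ⟨hconn, h⟩).symm
    · obtain ⟨G', hlt, hconn'⟩ := exists_lt_connected hconn h
      have : G'.edgeFinset.card < G.edgeFinset.card :=
        Finset.card_lt_card (edgeFinset_ssubset_edgeFinset.mpr hlt)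
      omega
  | succ n ih =>
    intro G _ hle hconn
    by_cases h : G.IsAcyclic
    · exact le_of_eq (IsTree.card_edgeFinset ⟨hconn, h⟩).symm
    · obtain ⟨G', hlt, hconn'⟩ := exists_lt_connected hconn h
      have hlt' : G'.edgeFinset.card < G.edgeFinset.card :=
        Finset.card_lt_card (edgeFinset_ssubset_edgeFinset.mpr hlt)
      have := ih G' (by omega) hconn'
      omega

private lemma isTree_of_connected_card {V : Type*} [Fintype V] [DecidableEq V]
    (G : SimpleGraph V) [Fintype G.edgeSet] (hconn : G.Connected)
    (hcard : G.edgeFinset.card + 1 = Fintype.card V) : G.IsTree := by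
  classical
  refine ⟨hconn, ?_⟩
  by_contra h
  obtain ⟨G', hlt, hconn'⟩ := exists_lt_connected hconn h
  have hlt' : G'.edgeFinset.card < G.edgeFinset.card :=
    Finset.card_lt_card (edgeFinset_ssubset_edgeFinset.mpr hlt)
  have := card_le_of_connected' G'.edgeFinset.card G' le_rfl hconn'
  omega


section Aux

variable {V : Type*} (G : SimpleGraph V) (A J : Finset V) (f : V → V)

/-- The spanning tree: all edges inside `A`, plus the chosen pendant edge `s(v, f v)`
for each `v ∈ J`. -/
private def auxS : SimpleGraph V where
  Adj u v := G.Adj u v ∧ ((u ∈ A ∧ v ∈ A) ∨ (u ∈ J ∧ v = f u) ∨ (v ∈ J ∧ u = f v))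
  symm := by
    constructor
    intro u v ⟨h, h'⟩
    exact ⟨h.symm, by tauto⟩
  loopless := ⟨fun v h => G.loopless.irrefl v h.1⟩

private lemma auxS_adj {u v : V} : (auxS G A J f).Adj u v ↔
    G.Adj u v ∧ ((u ∈ A ∧ v ∈ A) ∨ (u ∈ J ∧ v = f u) ∨ (v ∈ J ∧ u = f v)) := Iff.rfl

end Aux


/-- Given a partition `{A, J}` of a connected cubic graph with `A` inducing a tree `T`
and `J` independent, there is a spanning tree `S⁺` of `G` containing `T` in which every
vertex of `J` is a leaf, and every component of the cotree `G − E(S⁺)` is even. -/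
theorem stmt5 {V : Type*} [Fintype V] [DecidableEq V] (G : SimpleGraph V)
    [DecidableRel G.Adj] (hconn : G.Connected) (hcubic : ∀ v, G.degree v = 3)
    (A J : Finset V) (hdisj : Disjoint A J) (hcover : A ∪ J = Finset.univ)
    (htree : (G.induce (↑A : Set V)).IsTree)
    (hind : ∀ u ∈ J, ∀ v ∈ J, ¬ G.Adj u v) :
    ∃ S : SimpleGraph V, S ≤ G ∧ S.IsTree ∧
      (∀ u ∈ A, ∀ v ∈ A, G.Adj u v → S.Adj u v) ∧
      (∀ v ∈ J, (S.neighborSet v).ncard = 1) ∧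
      (∀ c : (G \ S).ConnectedComponent, Even ((cotreeCompEdges (G \ S) c).ncard)) := by
  classical
  -- every vertex has a neighbor
  have hex : ∀ v : V, ∃ u, G.Adj v u := by
    intro v
    rw [← degree_pos_iff_exists_adj, hcubic]
    omega
  choose f hfadj using hex
  have hmemA : ∀ v : V, v ∉ J → v ∈ A := by
    intro v hv
    have : v ∈ A ∪ J := hcover ▸ Finset.mem_univ v
    rcases Finset.mem_union.mp this with h | h
    · exact h
    · exact absurd h hv
  have hnJA : ∀ v ∈ J, ∀ u, G.Adj v u → u ∈ A := by
    intro v hv u hadj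
    refine hmemA u fun hu => hind v hv u hu hadj
  have hfA : ∀ v ∈ J, f v ∈ A := fun v hv => hnJA v hv _ (hfadj v)
  set S : SimpleGraph V := auxS G A J f with hS
  have hSle : S ≤ G := fun u v h => h.1
  -- neighbors of J vertices in S
  have hSnbr : ∀ v ∈ J, ∀ u, S.Adj v u ↔ u = f v := by
    intro v hv u
    constructor
    · rintro ⟨hadj, ⟨hvA, _⟩ | ⟨_, rfl⟩ | ⟨huJ, rfl⟩⟩
      · exact absurd hvA (Finset.disjoint_left.mp hdisj.symm hv)
      · rfl
      · exact absurd hv (Finset.disjoint_left.mp hdisj (hfA u huJ))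
    · rintro rfl
      exact ⟨hfadj v, Or.inr (Or.inl ⟨hv, rfl⟩)⟩
  have hAedge : ∀ u ∈ A, ∀ v ∈ A, G.Adj u v → S.Adj u v := by
    intro u hu v hv h
    exact ⟨h, Or.inl ⟨hu, hv⟩⟩
  -- connectivity
  have : Nonempty V := hconn.nonempty
  have hreachA : ∀ u ∈ A, ∀ v ∈ A, S.Reachable u v := by
    intro u hu v hv
    have h := htree.isConnected.preconnected ⟨u, Finset.mem_coe.mpr hu⟩ ⟨v, Finset.mem_coe.mpr hv⟩
    exact h.map ⟨Subtype.val, by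
      rintro ⟨a, ha⟩ ⟨b, hb⟩ hab
      exact hAedge a (Finset.mem_coe.mp ha) b (Finset.mem_coe.mp hb) hab⟩
  have hreach : ∀ u, ∃ a ∈ A, S.Reachable u a := by
    intro u
    by_cases hu : u ∈ J
    · exact ⟨f u, hfA u hu, (((hSnbr u hu (f u)).mpr rfl)).reachable⟩
    · exact ⟨u, hmemA u hu, Reachable.refl u⟩
  have hSconn : S.Connected := by
    refine ⟨fun u v => ?_⟩
    obtain ⟨a, ha, hua⟩ := hreach u
    obtain ⟨b, hb, hvb⟩ := hreach v
    exact hua.trans ((hreachA a ha b hb).trans hvb.symm)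
  -- edge counting
  have hScard : S.edgeFinset.card + 1 = Fintype.card V := by
    have hSeq : S.edgeFinset =
        ((G.induce (↑A : Set V)).edgeFinset.image (Sym2.map Subtype.val)) ∪
          J.image (fun v => s(v, f v)) := by
      ext e
      induction e with
      | h u v =>
        simp only [mem_edgeFinset, Finset.mem_union, Finset.mem_image, mem_edgeSet]
        constructor
        · rintro ⟨hadj, ⟨hu, hv⟩ | ⟨huJ, rfl⟩ | ⟨hvJ, rfl⟩⟩
          · refine Or.inl ⟨s(⟨u, Finset.mem_coe.mpr hu⟩, ⟨v, Finset.mem_coe.mpr hv⟩), ?_, rfl⟩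
            simpa [mem_edgeFinset] using hadj
          · exact Or.inr ⟨u, huJ, rfl⟩
          · exact Or.inr ⟨v, hvJ, Sym2.eq_swap⟩
        · rintro (⟨e', he', heq⟩ | ⟨w, hw, heq⟩)
          · induction e' with
            | h a b =>
              rw [mem_edgeSet] at he'
              have hab : G.Adj ↑a ↑b := he'
              simp only [Sym2.map_pair_eq, Sym2.eq_iff] at heq
              rcases heq with ⟨ha, hb⟩ | ⟨ha, hb⟩
              · subst ha; subst hb
                exact hAedge _ (Finset.mem_coe.mp a.2) _ (Finset.mem_coe.mp b.2) hab
              · subst ha; subst hb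
                exact hAedge _ (Finset.mem_coe.mp b.2) _ (Finset.mem_coe.mp a.2) hab.symm
          · rw [Sym2.eq_iff] at heq
            rcases heq with ⟨h1, h2⟩ | ⟨h1, h2⟩
            · subst h1; subst h2
              exact (hSnbr _ hw _).mpr rfl
            · subst h1; subst h2
              exact ((hSnbr _ hw _).mpr rfl).symm
    have hdisj' : Disjoint ((G.induce (↑A : Set V)).edgeFinset.image (Sym2.map Subtype.val))
        (J.image (fun v => s(v, f v))) := by
      rw [Finset.disjoint_left]
      rintro e he he'
      obtain ⟨e', he', rfl⟩ := Finset.mem_image.mp he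
      obtain ⟨w, hw, heq⟩ := Finset.mem_image.mp he'
      induction e' with
      | h a b =>
        rw [Sym2.map_pair_eq, Sym2.eq_iff] at heq
        have haA : ↑a ∈ A := Finset.mem_coe.mp a.2
        have hbA : ↑b ∈ A := Finset.mem_coe.mp b.2
        rcases heq with ⟨h1, _⟩ | ⟨h1, _⟩
        · subst h1; exact Finset.disjoint_left.mp hdisj haA hw
        · subst h1; exact Finset.disjoint_left.mp hdisj hbA hw
    have hc1 : ((G.induce (↑A : Set V)).edgeFinset.image (Sym2.map Subtype.val)).card + 1
        = A.card := by
      rw [Finset.card_image_of_injective _ (Sym2.map.injective Subtype.val_injective)]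
      have h := htree.card_edgeFinset
      have hAc : Fintype.card (↑A : Set V) = A.card := by simp
      rwa [hAc] at h
    have hc2 : (J.image (fun v => s(v, f v))).card = J.card := by
      apply Finset.card_image_of_injOn
      intro a ha b hb heq
      rw [Sym2.eq_iff] at heq
      rcases heq with ⟨h1, _⟩ | ⟨h1, h2⟩
      · exact h1
      · rw [h1] at ha
        exact absurd ha (Finset.disjoint_left.mp hdisj (hfA b hb))
    rw [hSeq, Finset.card_union_of_disjoint hdisj']
    have hcardV : A.card + J.card = Fintype.card V := by
      rw [← Finset.card_union_of_disjoint hdisj, hcover, Finset.card_univ]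
    omega
  have hStree : S.IsTree := isTree_of_connected_card S hSconn hScard
  refine ⟨S, hSle, hStree, hAedge, ?_, ?_⟩
  · intro v hv
    have : S.neighborSet v = {f v} := by
      ext u
      simp only [mem_neighborSet, Set.mem_singleton_iff]
      exact hSnbr v hv u
    rw [this, Set.ncard_singleton]
  · -- cotree components are even
    set H := G \ S with hH
    intro c
    have hHadj : ∀ u v, H.Adj u v ↔ G.Adj u v ∧ ¬ S.Adj u v := fun u v => sdiff_adj G S u v
    -- H-degree of each J-vertex is 2
    have hHnbrJ : ∀ v ∈ J, H.neighborFinset v = (G.neighborFinset v).erase (f v) := by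
      intro v hv
      ext u
      simp only [mem_neighborFinset, Finset.mem_erase, hHadj, hSnbr v hv u]
      constructor
      · rintro ⟨h1, h2⟩; exact ⟨fun h => h2 h, h1⟩
      · rintro ⟨h1, h2⟩; exact ⟨h2, h1⟩
    have hHdeg : ∀ v ∈ J, H.degree v = 2 := by
      intro v hv
      rw [← card_neighborFinset_eq_degree, hHnbrJ v hv,
        Finset.card_erase_of_mem (by rw [mem_neighborFinset]; exact hfadj v),
        card_neighborFinset_eq_degree, hcubic]
    -- each H-edge has exactly one endpoint in J
    have hHJ : ∀ u v, H.Adj u v → u ∈ J ∨ v ∈ J := by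
      intro u v h
      rw [hHadj] at h
      by_contra hc
      push_neg at hc
      exact h.2 (hAedge u (hmemA u hc.1) v (hmemA v hc.2) h.1)
    -- the component edge set as a Finset
    set F : Finset (Sym2 V) :=
      (J.filter (fun v => H.connectedComponentMk v = c)).biUnion
        (fun v => H.incidenceFinset v) with hF
    have hFeq : cotreeCompEdges H c = ↑F := by
      ext e
      induction e with
      | h u v =>
        simp only [cotreeCompEdges, Set.mem_setOf_eq, Finset.coe_biUnion, Set.mem_iUnion,
          Finset.mem_coe, Finset.mem_filter, mem_incidenceFinset, hF]
        constructor
        · rintro ⟨he, hcomp⟩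
          rw [mem_edgeSet] at he
          have huc : H.connectedComponentMk u = c := hcomp u (Sym2.mem_mk_left u v)
          have hvc : H.connectedComponentMk v = c := hcomp v (Sym2.mem_mk_right u v)
          rcases hHJ u v he with hu | hv
          · exact ⟨u, ⟨hu, huc⟩, he, Sym2.mem_mk_left u v⟩
          · exact ⟨v, ⟨hv, hvc⟩, he, Sym2.mem_mk_right u v⟩
        · rintro ⟨w, ⟨hwJ, hwc⟩, he, hwm⟩
          have he' : H.Adj u v := (mem_edgeSet H).mp he
          refine ⟨he, ?_⟩
          have hsame : H.connectedComponentMk u = H.connectedComponentMk v :=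
            ConnectedComponent.connectedComponentMk_eq_of_adj he'
          have : H.connectedComponentMk w = c := hwc
          rcases Sym2.mem_iff.mp hwm with rfl | rfl
          · intro x hx
            rcases Sym2.mem_iff.mp hx with rfl | rfl
            · exact this
            · exact hsame ▸ this
          · intro x hx
            rcases Sym2.mem_iff.mp hx with rfl | rfl
            · exact hsame.trans this
            · exact this
    rw [hFeq, Set.ncard_coe_finset]
    have hcard : F.card = ∑ v ∈ J.filter (fun v => H.connectedComponentMk v = c),
        (H.incidenceFinset v).card := by
      apply Finset.card_biUnion
      intro a ha b hb hab
      rw [Function.onFun, Finset.disjoint_left]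
      intro e hea heb
      rw [mem_incidenceFinset] at hea heb
      have haJ : a ∈ J := (Finset.mem_filter.mp ha).1
      have hbJ : b ∈ J := (Finset.mem_filter.mp hb).1
      -- e contains both a and b, so e = s(a, b), so H.Adj a b, contradicting independence
      obtain ⟨he, ham⟩ := hea
      obtain ⟨_, hbm⟩ := heb
      induction e with
      | h x y =>
        have hxy : H.Adj x y := (mem_edgeSet H).mp he
        rcases Sym2.mem_iff.mp ham with rfl | rfl <;> rcases Sym2.mem_iff.mp hbm with rfl | rfl
        · exact hab rfl
        · exact hind a haJ b hbJ (hxy.1)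
        · exact hind b hbJ a haJ (hxy.1)
        · exact hab rfl
    rw [hcard]
    rw [Finset.sum_congr rfl (fun v hv => by
      rw [card_incidenceFinset_eq_degree, hHdeg v (Finset.mem_filter.mp hv).1])]
    rw [Finset.sum_const, smul_eq_mul]
    exact ⟨_, by ring⟩
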